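/- For all real numbers β, γ > 0 with β + γ = 2, and all non-negative real numbers a, b, one has (a^β − b^β)(a^γ − b^γ) ≥ βγ(a − b)². -/

import Mathlib

open Real

private lemma sinh_mul_le (s x : ℝ) (hs0 : 0 ≤ s) (hs1 : s ≤ 1) (hx : 0 ≤ x) :
    Real.sinh (s * x) ≤ s * Real.sinh x := by
  have hder : ∀ y : ℝ, HasDerivAt (fun y => s * Real.sinh y - Real.sinh (s * y))
      (s * Real.cosh y - s * Real.cosh (s * y)) y := by
    intro y
    have h1 := (Real.hasDerivAt_sinh y).const_mul s
    have h2 := (Real.hasDerivAt_sinh (s * y)).comp y ((hasDerivAt_id y).const_mul s)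
    have h3 : HasDerivAt (fun y => s * Real.sinh y - Real.sinh (s * y))
        (s * Real.cosh y - Real.cosh (s * y) * (s * 1)) y := h1.sub h2
    simpa [mul_comm] using h3
  have mono : MonotoneOn (fun y => s * Real.sinh y - Real.sinh (s * y)) (Set.Ici 0) := by
    apply monotoneOn_of_deriv_nonneg (convex_Ici 0)
    · exact (((continuous_const.mul Real.continuous_sinh).sub
        (Real.continuous_sinh.comp (continuous_const.mul continuous_id))).continuousOn)
    · intro y _
      exact (hder y).differentiableAt.differentiableWithinAt
    · intro y hy
      rw [(hder y).deriv]
      have hy0 : (0:ℝ) ≤ y := le_of_lt (by simpa using hy)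
      have : Real.cosh (s * y) ≤ Real.cosh y := by
        rw [Real.cosh_le_cosh]
        rw [abs_of_nonneg (mul_nonneg hs0 hy0), abs_of_nonneg hy0]
        nlinarith
      nlinarith
  have h0 : (0:ℝ) ∈ Set.Ici (0:ℝ) := Set.mem_Ici.mpr le_rfl
  have hx' : x ∈ Set.Ici (0:ℝ) := hx
  have := mono h0 hx' hx
  simpa using this

private lemma sinh_sq_le (s t : ℝ) (hs : |s| ≤ 1) :
    Real.sinh (s * t) ^ 2 ≤ s ^ 2 * Real.sinh t ^ 2 := by
  have h1 : Real.sinh (s * t) ^ 2 = Real.sinh (|s| * |t|) ^ 2 := by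
    rw [← sq_abs, Real.abs_sinh, abs_mul]
  have h2 : Real.sinh t ^ 2 = Real.sinh |t| ^ 2 := by
    rw [← sq_abs (Real.sinh t), Real.abs_sinh]
  have key := sinh_mul_le |s| |t| (abs_nonneg s) hs (abs_nonneg t)
  have hnn : 0 ≤ Real.sinh (|s| * |t|) :=
    Real.sinh_nonneg_iff.mpr (mul_nonneg (abs_nonneg s) (abs_nonneg t))
  have hsq := mul_self_le_mul_self hnn key
  rw [h1, h2]
  nlinarith [abs_nonneg s, Real.sinh_nonneg_iff.mpr (abs_nonneg t), sq_abs s]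

private lemma sinh_core (β γ d : ℝ) (hβ : 0 < β) (hγ : 0 < γ) (hβγ : β + γ = 2) :
    β * γ * Real.sinh d ^ 2 ≤ Real.sinh (β * d) * Real.sinh (γ * d) := by
  set s := β - 1 with hsdef
  have hs : |s| ≤ 1 := by
    rw [abs_le]; constructor <;> (simp only [hsdef]; nlinarith)
  have hβd : β * d = d + s * d := by simp only [hsdef]; ring
  have hγd : γ * d = d - s * d := by simp only [hsdef]; linear_combination d * hβγ
  have hβγs : β * γ = 1 - s ^ 2 := by simp only [hsdef]; linear_combination β * hβγ
  rw [hβd, hγd, Real.sinh_add, Real.sinh_sub, hβγs]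
  have hcs := Real.cosh_sq (s * d)
  have hcd := Real.cosh_sq d
  have hkey := sinh_sq_le s d hs
  nlinarith [hkey, hcs, hcd]

theorem stmt_0 (β γ : ℝ) (hβ : 0 < β) (hγ : 0 < γ) (hβγ : β + γ = 2)
    (a b : ℝ) (ha : 0 ≤ a) (hb : 0 ≤ b) :
    (a ^ β - b ^ β) * (a ^ γ - b ^ γ) ≥ β * γ * (a - b) ^ 2 := by
  have hβγ1 : β * γ ≤ 1 := by nlinarith [sq_nonneg (β - γ)]
  rcases eq_or_lt_of_le ha with ha0 | ha0
  · rcases eq_or_lt_of_le hb with hb0 | hb0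
    · simp [← ha0, ← hb0, Real.zero_rpow hβ.ne', Real.zero_rpow hγ.ne']
    · rw [← ha0]
      rw [Real.zero_rpow hβ.ne', Real.zero_rpow hγ.ne']
      have : b ^ β * b ^ γ = b ^ 2 := by
        rw [← Real.rpow_add hb0, hβγ, Real.rpow_two]
      nlinarith [Real.rpow_pos_of_pos hb0 β, Real.rpow_pos_of_pos hb0 γ, sq_nonneg b]
  · rcases eq_or_lt_of_le hb with hb0 | hb0
    · rw [← hb0]
      rw [Real.zero_rpow hβ.ne', Real.zero_rpow hγ.ne']
      have : a ^ β * a ^ γ = a ^ 2 := by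
        rw [← Real.rpow_add ha0, hβγ, Real.rpow_two]
      nlinarith [Real.rpow_pos_of_pos ha0 β, Real.rpow_pos_of_pos ha0 γ, sq_nonneg a]
    · set p := Real.log a with hp
      set q := Real.log b with hq
      set m := (p + q) / 2 with hm
      set d := (p - q) / 2 with hd
      have key : ∀ θ : ℝ, a ^ θ - b ^ θ = 2 * Real.exp (θ * m) * Real.sinh (θ * d) := by
        intro θ
        rw [Real.rpow_def_of_pos ha0, Real.rpow_def_of_pos hb0, Real.sinh_eq]
        have h1 : Real.log a * θ = θ * m + θ * d := by
          simp only [hm, hd, hp, hq]; ring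
        have h2 : Real.log b * θ = θ * m + -(θ * d) := by
          simp only [hm, hd, hp, hq]; ring
        rw [h1, h2, Real.exp_add, Real.exp_add]
        ring
      have hab : a - b = 2 * Real.exp (1 * m) * Real.sinh (1 * d) := by
        have := key 1
        rwa [Real.rpow_one, Real.rpow_one] at this
      simp only [one_mul] at hab
      rw [key β, key γ, hab]
      have hcore := sinh_core β γ d hβ hγ hβγ
      have hem : Real.exp (β * m) * Real.exp (γ * m) = Real.exp m ^ 2 := by
        rw [← Real.exp_add, sq, ← Real.exp_add]
        congr 1
        linear_combination m * hβγ
      have heq : 2 * Real.exp (β * m) * Real.sinh (β * d) *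
          (2 * Real.exp (γ * m) * Real.sinh (γ * d)) =
          4 * Real.exp m ^ 2 * (Real.sinh (β * d) * Real.sinh (γ * d)) := by
        rw [← hem]; ring
      have heq2 : β * γ * (2 * Real.exp m * Real.sinh d) ^ 2 =
          4 * Real.exp m ^ 2 * (β * γ * Real.sinh d ^ 2) := by ring
      rw [heq, heq2]
      have h4 : (0:ℝ) ≤ 4 * Real.exp m ^ 2 := by positivity
      exact mul_le_mul_of_nonneg_left hcore h4
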